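/- Let G be a graph on at least four vertices and u ∈ V(G) a strong support vertex whose pendant neighbors are v₁,…,v_ℓ with ℓ ≥ 2. If G' = G − {u, v₁,…,v_ℓ} is a connected graph, then γ₂(G') ≤ a(G') + 1 implies γ₂(G) ≤ a(G) + 1. -/

import Mathlib

open Classical Finset
noncomputable section

/-- `S` is a 2-dominating set of `G`: every vertex outside `S` has ≥ 2 neighbors in `S`. -/
def IsTwoDomSet {V : Type*} [Fintype V] (G : SimpleGraph V) (S : Finset V) : Prop :=
  ∀ v, v ∉ S → 2 ≤ (G.neighborFinset v ∩ S).card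

/-- The 2-domination number. -/
noncomputable def gamma2 {V : Type*} [Fintype V] (G : SimpleGraph V) : ℕ :=
  sInf {k | ∃ S : Finset V, IsTwoDomSet G S ∧ S.card = k}

/-- `S` is an annihilation set of `G`: the sum of degrees over `S` is at most `m(G)`. -/
def IsAnnSet {V : Type*} [Fintype V] (G : SimpleGraph V) (S : Finset V) : Prop :=
  ∑ v ∈ S, G.degree v ≤ G.edgeFinset.card

/-- The annihilation number: the largest size of an annihilation set (equivalently, the
largest `k` such that the sum of the `k` smallest degrees is at most the edge count). -/
noncomputable def annihilation {V : Type*} [Fintype V] (G : SimpleGraph V) : ℕ :=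
  sSup {k | ∃ S : Finset V, IsAnnSet G S ∧ S.card = k}

/-- Lemma 3.1: removing a strong support vertex together with all its pendant neighbors
preserves the bound `γ₂ ≤ a + 1` (provided the remaining graph is connected). -/
theorem stmt3 {V : Type*} [Fintype V] (G : SimpleGraph V) (h4 : 4 ≤ Fintype.card V)
    (u : V) (ℓ : ℕ) (hℓ : 2 ≤ ℓ) (v : Fin ℓ → V) (hinj : Function.Injective v)
    (hadj : ∀ i, G.Adj u (v i)) (hdeg : ∀ i, G.degree (v i) = 1)
    (hall : ∀ w, G.Adj u w → G.degree w = 1 → ∃ i, w = v i)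
    (hconn : (G.induce {w : V | w ≠ u ∧ ∀ i, w ≠ v i}).Connected)
    (h : gamma2 (G.induce {w : V | w ≠ u ∧ ∀ i, w ≠ v i}) ≤
          annihilation (G.induce {w : V | w ≠ u ∧ ∀ i, w ≠ v i}) + 1) :
    gamma2 G ≤ annihilation G + 1 := by
  classical
  set T : Set V := {w : V | w ≠ u ∧ ∀ i, w ≠ v i} with hTdef
  set G' : SimpleGraph ↥T := G.induce T with hG'def
  have huT : u ∉ T := fun hc => hc.1 rfl
  have hvT : ∀ i, v i ∉ T := fun i hc => hc.2 i rfl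
  -- the only neighbor of each leaf is u
  have hnbrv : ∀ i, G.neighborFinset (v i) = {u} := by
    intro i
    have hcard : (G.neighborFinset (v i)).card = 1 := by
      rw [G.card_neighborFinset_eq_degree]; exact hdeg i
    obtain ⟨a, ha⟩ := Finset.card_eq_one.mp hcard
    have hu : u ∈ G.neighborFinset (v i) := by
      rw [SimpleGraph.mem_neighborFinset]; exact (hadj i).symm
    rw [ha] at hu ⊢
    rw [Finset.mem_singleton] at hu
    rw [hu]
  have hadjv : ∀ (i) (w : V), G.Adj w (v i) → w = u := by
    intro i w hw
    have : w ∈ G.neighborFinset (v i) := by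
      rw [SimpleGraph.mem_neighborFinset]; exact hw.symm
    rwa [hnbrv i, Finset.mem_singleton] at this
  have hTc : ∀ x : V, x ∉ T → x = u ∨ ∃ i, x = v i := by
    intro x hx
    by_cases h1 : x = u
    · exact Or.inl h1
    · right
      simp only [hTdef, Set.mem_setOf_eq, not_and, not_forall, not_not] at hx
      obtain ⟨i, hi⟩ := hx h1
      exact ⟨i, hi⟩
  have hclosed : ∀ w ∈ T, ∀ x, G.Adj w x → x ∈ T ∨ x = u := by
    intro w hw x hx
    by_cases hxT : x ∈ T
    · exact Or.inl hxT
    · rcases hTc x hxT with h1 | ⟨i, rfl⟩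
      · exact Or.inr h1
      · exact absurd (hadjv i w hx) hw.1
  -- degree split for vertices of T
  have degsplit : ∀ x : ↥T, G.degree (x : V) =
      G'.degree x + (if G.Adj u (x : V) then 1 else 0) := by
    intro x
    have hpart := Finset.card_filter_add_card_filter_not
      (s := G.neighborFinset (x : V)) (p := fun y => y ∈ T)
    have h1 : ((G.neighborFinset (x : V)).filter (fun y => y ∈ T)).card = G'.degree x := by
      rw [← SimpleGraph.card_neighborFinset_eq_degree]
      apply Finset.card_bij (fun (y : V) hy => (⟨y, (Finset.mem_filter.mp hy).2⟩ : ↥T))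
      · intro y hy
        rw [SimpleGraph.mem_neighborFinset]
        have := (Finset.mem_filter.mp hy).1
        rw [SimpleGraph.mem_neighborFinset] at this
        simpa [hG'def] using this
      · intro y1 hy1 y2 hy2 hEq
        simpa using congrArg Subtype.val hEq
      · intro z hz
        rw [SimpleGraph.mem_neighborFinset] at hz
        have hz' : G.Adj (x : V) (z : V) := by simpa [hG'def] using hz
        refine ⟨(z : V), ?_, by simp⟩
        rw [Finset.mem_filter, SimpleGraph.mem_neighborFinset]
        exact ⟨hz', z.2⟩
    have h2 : ((G.neighborFinset (x : V)).filter (fun y => ¬ y ∈ T)).card =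
        (if G.Adj u (x : V) then 1 else 0) := by
      have : ((G.neighborFinset (x : V)).filter (fun y => ¬ y ∈ T)) =
          (if G.Adj u (x : V) then {u} else ∅) := by
        ext y
        rw [Finset.mem_filter, SimpleGraph.mem_neighborFinset]
        constructor
        · rintro ⟨hxy, hyT⟩
          have hy : y = u := by
            rcases hclosed (x : V) x.2 y hxy with hT | hu
            · exact absurd hT hyT
            · exact hu
          subst hy
          simp [hxy.symm]
        · intro hy
          by_cases hA : G.Adj u (x : V)
          · simp only [if_pos hA, Finset.mem_singleton] at hy
            subst hy
            exact ⟨hA.symm, huT⟩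
          · simp [if_neg hA] at hy
      rw [this]
      by_cases hA : G.Adj u (x : V) <;> simp [hA]
    rw [← SimpleGraph.card_neighborFinset_eq_degree, ← hpart, h1, h2]
  -- counting neighbors of u
  set d : ℕ := ((G.neighborFinset u).filter (fun y => y ∈ T)).card with hd
  have hdegu : G.degree u = d + ℓ := by
    have hpart := Finset.card_filter_add_card_filter_not
      (s := G.neighborFinset u) (p := fun y => y ∈ T)
    have h2 : ((G.neighborFinset u).filter (fun y => ¬ y ∈ T)) =
        Finset.univ.image v := by
      ext y
      rw [Finset.mem_filter, SimpleGraph.mem_neighborFinset]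
      constructor
      · rintro ⟨hxy, hyT⟩
        rcases hTc y hyT with rfl | ⟨i, rfl⟩
        · exact absurd hxy (G.irrefl)
        · exact Finset.mem_image.mpr ⟨i, Finset.mem_univ i, rfl⟩
      · intro hy
        obtain ⟨i, _, rfl⟩ := Finset.mem_image.mp hy
        exact ⟨hadj i, hvT i⟩
    have h3 : (Finset.univ.image v).card = ℓ := by
      rw [Finset.card_image_of_injective _ hinj, Finset.card_univ, Fintype.card_fin]
    rw [← SimpleGraph.card_neighborFinset_eq_degree, ← hpart, h2, h3]
  -- edge count relation
  have hedge : G.edgeFinset.card = G'.edgeFinset.card + G.degree u := by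
    have hh : ∑ w : V, G.degree w = 2 * G.edgeFinset.card :=
      G.sum_degrees_eq_twice_card_edges
    have hh' : ∑ x : ↥T, G'.degree x = 2 * G'.edgeFinset.card :=
      G'.sum_degrees_eq_twice_card_edges
    -- split the sum over V
    have hsplit : (Finset.univ : Finset V) =
        T.toFinset ∪ (insert u (Finset.univ.image v)) := by
      ext x
      constructor
      · intro _
        by_cases hx : x ∈ T
        · exact Finset.mem_union_left _ (Set.mem_toFinset.mpr hx)
        · rcases hTc x hx with rfl | ⟨i, rfl⟩
          · exact Finset.mem_union_right _ (Finset.mem_insert_self _ _)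
          · exact Finset.mem_union_right _ (Finset.mem_insert_of_mem
              (Finset.mem_image_of_mem v (Finset.mem_univ i)))
      · intro _
        exact Finset.mem_univ x
    have hdisj : Disjoint T.toFinset (insert u (Finset.univ.image v)) := by
      rw [Finset.disjoint_left]
      intro x hx hx'
      rw [Set.mem_toFinset] at hx
      rcases Finset.mem_insert.mp hx' with rfl | hx''
      · exact huT hx
      · obtain ⟨i, _, rfl⟩ := Finset.mem_image.mp hx''
        exact hvT i hx
    have hsum1 : ∑ w ∈ T.toFinset, G.degree w =
        2 * G'.edgeFinset.card + d := by
      have e1 : ∑ w ∈ T.toFinset, G.degree w = ∑ x : ↥T, G.degree (x : V) :=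
        Finset.sum_subtype T.toFinset (by simp) _
      rw [e1]
      have e2 : ∑ x : ↥T, G.degree (x : V) =
          ∑ x : ↥T, (G'.degree x + (if G.Adj u (x : V) then 1 else 0)) := by
        exact Finset.sum_congr rfl (fun x _ => degsplit x)
      rw [e2, Finset.sum_add_distrib, hh']
      congr 1
      rw [← Finset.card_filter]
      rw [hd]
      apply Finset.card_bij (fun (x : ↥T) _ => (x : V))
      · intro x hx
        rw [Finset.mem_filter] at hx ⊢
        rw [SimpleGraph.mem_neighborFinset]
        exact ⟨hx.2, x.2⟩
      · intro x1 _ x2 _ hEq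
        exact Subtype.ext hEq
      · intro y hy
        rw [Finset.mem_filter, SimpleGraph.mem_neighborFinset] at hy
        exact ⟨⟨y, hy.2⟩, by simpa using hy.1, rfl⟩
    have hsum2 : ∑ w ∈ insert u (Finset.univ.image v), G.degree w =
        G.degree u + ℓ := by
      have hu' : u ∉ Finset.univ.image v := by
        intro hc
        obtain ⟨i, _, hi⟩ := Finset.mem_image.mp hc
        exact (hadj i).ne' hi
      rw [Finset.sum_insert hu']
      congr 1
      rw [Finset.sum_image (fun a _ b _ hab => hinj hab)]
      simp [hdeg]
    rw [hsplit, Finset.sum_union hdisj, hsum1, hsum2, hdegu] at hh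
    omega
  -- leaves finset
  set L : Finset V := Finset.univ.image v with hL
  have hcardL : L.card = ℓ := by
    rw [hL, Finset.card_image_of_injective _ hinj, Finset.card_univ, Fintype.card_fin]
  -- get a minimum 2-dominating set of G'
  have hne : {k | ∃ S : Finset ↥T, IsTwoDomSet G' S ∧ S.card = k}.Nonempty :=
    ⟨(Finset.univ : Finset ↥T).card, Finset.univ,
      fun x hx => absurd (Finset.mem_univ x) hx, rfl⟩
  obtain ⟨S', hS', hcardS'⟩ := Nat.sInf_mem hne
  -- get a maximum annihilation set of G'
  have hne' : {k | ∃ A : Finset ↥T, IsAnnSet G' A ∧ A.card = k}.Nonempty :=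
    ⟨0, ∅, by simp [IsAnnSet], rfl⟩
  have hbdd' : BddAbove {k | ∃ A : Finset ↥T, IsAnnSet G' A ∧ A.card = k} := by
    refine ⟨Fintype.card ↥T, ?_⟩
    rintro k ⟨A, _, rfl⟩
    exact Finset.card_le_univ A
  obtain ⟨A', hA', hcardA'⟩ := Nat.sSup_mem hne' hbdd'
  -- the 2-dominating set of G
  set S : Finset V := S'.image (Subtype.val) ∪ L with hS
  have hdomS : IsTwoDomSet G S := by
    intro w hw
    by_cases hwT : w ∈ T
    · have hw' : (⟨w, hwT⟩ : ↥T) ∉ S' := by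
        intro hc
        exact hw (Finset.mem_union_left _ (Finset.mem_image.mpr ⟨⟨w, hwT⟩, hc, rfl⟩))
      have h2 := hS' ⟨w, hwT⟩ hw'
      refine le_trans h2 ?_
      apply Finset.card_le_card_of_injOn (fun (x : ↥T) => (x : V))
      · intro z hz
        simp only [Finset.mem_coe, Finset.mem_inter] at hz
        have hz1 := hz.1
        have hz2 := hz.2
        rw [Finset.mem_coe, Finset.mem_inter, SimpleGraph.mem_neighborFinset]
        rw [SimpleGraph.mem_neighborFinset] at hz1
        constructor
        · simpa [hG'def] using hz1
        · exact Finset.mem_union_left _ (Finset.mem_image.mpr ⟨z, hz2, rfl⟩)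
      · exact fun x1 _ x2 _ hEq => Subtype.ext hEq
    · rcases hTc w hwT with h1 | ⟨i, rfl⟩
      · -- w = u : v 0 and v 1 are neighbors in S
        subst h1
        have h0 : (⟨0, by omega⟩ : Fin ℓ) ≠ (⟨1, by omega⟩ : Fin ℓ) := by
          simp [Fin.ext_iff]
        have hvne : v ⟨0, by omega⟩ ≠ v ⟨1, by omega⟩ := fun hc => h0 (hinj hc)
        have hsub : ({v ⟨0, by omega⟩, v ⟨1, by omega⟩} : Finset V) ⊆
            G.neighborFinset w ∩ S := by
          intro y hy
          rw [Finset.mem_inter, SimpleGraph.mem_neighborFinset]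
          rcases Finset.mem_insert.mp hy with rfl | hy'
          · exact ⟨hadj _, Finset.mem_union_right _
              (Finset.mem_image.mpr ⟨_, Finset.mem_univ _, rfl⟩)⟩
          · rw [Finset.mem_singleton] at hy'
            subst hy'
            exact ⟨hadj _, Finset.mem_union_right _
              (Finset.mem_image.mpr ⟨_, Finset.mem_univ _, rfl⟩)⟩
        calc (2 : ℕ) = ({v ⟨0, by omega⟩, v ⟨1, by omega⟩} : Finset V).card :=
            (Finset.card_pair hvne).symm
          _ ≤ _ := Finset.card_le_card hsub
      · exact absurd (Finset.mem_union_right _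
          (Finset.mem_image.mpr ⟨i, Finset.mem_univ i, rfl⟩)) hw
  have hcardS : S.card ≤ S'.card + ℓ := by
    calc S.card ≤ (S'.image Subtype.val).card + L.card := Finset.card_union_le _ _
      _ = S'.card + ℓ := by
        rw [Finset.card_image_of_injective _ Subtype.val_injective, hcardL]
  -- the annihilation set of G
  set A : Finset V := A'.image (Subtype.val) ∪ L with hA
  have hdisjA : Disjoint (A'.image (Subtype.val)) L := by
    rw [Finset.disjoint_left]
    intro x hx hx'
    obtain ⟨z, _, rfl⟩ := Finset.mem_image.mp hx
    obtain ⟨i, _, hi⟩ := Finset.mem_image.mp hx'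
    exact hvT i (hi ▸ z.2)
  have hcardA : A.card = A'.card + ℓ := by
    rw [hA, Finset.card_union_of_disjoint hdisjA,
      Finset.card_image_of_injective _ Subtype.val_injective, hcardL]
  have hannA : IsAnnSet G A := by
    unfold IsAnnSet
    rw [hA, Finset.sum_union hdisjA]
    have e1 : ∑ w ∈ A'.image Subtype.val, G.degree w =
        ∑ x ∈ A', G.degree (x : V) :=
      Finset.sum_image (fun a _ b _ hab => Subtype.val_injective hab)
    have e2 : ∑ w ∈ L, G.degree w = ℓ := by
      rw [hL, Finset.sum_image (fun a _ b _ hab => hinj hab)]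
      simp [hdeg]
    rw [e1, e2]
    have e3 : ∑ x ∈ A', G.degree (x : V) =
        ∑ x ∈ A', G'.degree x + ∑ x ∈ A', (if G.Adj u (x : V) then 1 else 0) := by
      rw [← Finset.sum_add_distrib]
      exact Finset.sum_congr rfl (fun x _ => degsplit x)
    have e4 : ∑ x ∈ A', (if G.Adj u (x : V) then 1 else 0) ≤ d := by
      rw [← Finset.card_filter]
      rw [hd]
      apply Finset.card_le_card_of_injOn (fun (x : ↥T) => (x : V))
      · intro x hx
        rw [Finset.mem_coe, Finset.mem_filter] at hx ⊢
        rw [SimpleGraph.mem_neighborFinset]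
        exact ⟨hx.2, x.2⟩
      · exact fun x1 _ x2 _ hEq => Subtype.ext hEq
    have e5 : ∑ x ∈ A', G'.degree x ≤ G'.edgeFinset.card := hA'
    calc ∑ x ∈ A', G.degree (x : V) + ℓ
        ≤ G'.edgeFinset.card + d + ℓ := by rw [e3]; omega
      _ ≤ G.edgeFinset.card := by rw [hedge, hdegu]; omega
  -- conclude
  have hg2 : gamma2 G ≤ S.card := Nat.sInf_le ⟨S, hdomS, rfl⟩
  have hbddG : BddAbove {k | ∃ B : Finset V, IsAnnSet G B ∧ B.card = k} := by
    refine ⟨Fintype.card V, ?_⟩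
    rintro k ⟨B, _, rfl⟩
    exact Finset.card_le_univ B
  have hann : A.card ≤ annihilation G := le_csSup hbddG ⟨A, hannA, rfl⟩
  have hγ' : gamma2 G' = S'.card := hcardS'.symm
  have hα' : annihilation G' = A'.card := hcardA'.symm
  rw [hγ', hα'] at h
  omega
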